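/- Let N be a normal subgroup of the discrete Heisenberg group Γ. If N has trivial intersection with the center Z of Γ, then N is contained in Z (and hence N is trivial). -/

import Mathlib

open Matrix

/-- A 3×3 matrix is upper unitriangular (Heisenberg) if it has the form
`[[1,a,c],[0,1,b],[0,0,1]]`. -/
def IsHeis {R : Type*} [CommRing R] (M : Matrix (Fin 3) (Fin 3) R) : Prop :=
  M = !![1, M 0 1, M 0 2; 0, 1, M 1 2; 0, 0, 1]

/-- The Heisenberg group over `R`: upper unitriangular 3×3 matrices under
matrix multiplication. -/
def Heis (R : Type*) [CommRing R] : Type _ := {M : Matrix (Fin 3) (Fin 3) R // IsHeis M}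

namespace Heis

variable {R : Type*} [CommRing R]

lemma isHeis_mk (a b c : R) : IsHeis !![1, a, c; 0, 1, b; 0, 0, 1] := by
  unfold IsHeis; norm_num; constructor <;> rfl

lemma exists_abc {M : Matrix (Fin 3) (Fin 3) R} (h : IsHeis M) :
    ∃ a b c, M = !![1, a, c; 0, 1, b; 0, 0, 1] := ⟨_, _, _, h⟩

lemma mul_mk (a b c a' b' c' : R) :
    !![1, a, c; 0, 1, b; 0, 0, 1] * !![1, a', c'; 0, 1, b'; 0, 0, 1]
      = !![1, a + a', c + a * b' + c'; 0, 1, b + b'; 0, 0, 1] := by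
  simp [Matrix.mul_fin_three]; ring_nf; simp

lemma inv_mul_mk (a b c : R) :
    !![1, -a, a * b - c; 0, 1, -b; 0, 0, 1] * !![1, a, c; 0, 1, b; 0, 0, 1]
      = !![1, 0, 0; 0, 1, 0; 0, 0, 1] := by
  rw [mul_mk]; norm_num; ring_nf

instance : Group (Heis R) where
  mul x y := ⟨x.1 * y.1, by
    obtain ⟨a, b, c, hx⟩ := exists_abc x.2
    obtain ⟨a', b', c', hy⟩ := exists_abc y.2
    rw [hx, hy, mul_mk]; exact isHeis_mk _ _ _⟩
  one := ⟨!![1, 0, 0; 0, 1, 0; 0, 0, 1], isHeis_mk 0 0 0⟩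
  inv x := ⟨!![1, -(x.1 0 1), x.1 0 1 * x.1 1 2 - x.1 0 2; 0, 1, -(x.1 1 2); 0, 0, 1],
    isHeis_mk _ _ _⟩
  mul_assoc x y z := Subtype.ext (mul_assoc x.1 y.1 z.1)
  one_mul x := Subtype.ext (by
    show !![1, 0, 0; 0, 1, 0; 0, 0, 1] * x.1 = x.1
    obtain ⟨a, b, c, hx⟩ := exists_abc x.2
    rw [hx, mul_mk]; norm_num)
  mul_one x := Subtype.ext (by
    show x.1 * !![1, 0, 0; 0, 1, 0; 0, 0, 1] = x.1
    obtain ⟨a, b, c, hx⟩ := exists_abc x.2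
    rw [hx, mul_mk]; norm_num)
  inv_mul_cancel x := Subtype.ext (by
    show !![1, -(x.1 0 1), x.1 0 1 * x.1 1 2 - x.1 0 2; 0, 1, -(x.1 1 2); 0, 0, 1] * x.1
        = !![1, 0, 0; 0, 1, 0; 0, 0, 1]
    obtain ⟨a, b, c, hx⟩ := exists_abc x.2
    rw [hx]; simpa using inv_mul_mk a b c)

lemma mul_val (x y : Heis R) : (x * y).1 = x.1 * y.1 := rfl
lemma one_val : (1 : Heis R).1 = !![1, 0, 0; 0, 1, 0; 0, 0, 1] := rfl

/-- The generator γ₁ of the discrete Heisenberg group. -/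
def γ₁ : Heis ℤ := ⟨!![1, 1, 0; 0, 1, 0; 0, 0, 1], isHeis_mk 1 0 0⟩

/-- The generator γ₂ of the discrete Heisenberg group. -/
def γ₂ : Heis ℤ := ⟨!![1, 0, 0; 0, 1, 1; 0, 0, 1], isHeis_mk 0 1 0⟩

end Heis

/-- Convenient constructor. -/
def mkH (a b c : ℤ) : Heis ℤ := ⟨!![1, a, c; 0, 1, b; 0, 0, 1], Heis.isHeis_mk a b c⟩

lemma mkH_mul (a b c a' b' c' : ℤ) :
    mkH a b c * mkH a' b' c' = mkH (a + a') (b + b') (c + a * b' + c') :=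
  Subtype.ext (Heis.mul_mk a b c a' b' c')

lemma mkH_one : mkH 0 0 0 = 1 := rfl

lemma mkH_inv (a b c : ℤ) : (mkH a b c)⁻¹ = mkH (-a) (-b) (a * b - c) := by
  symm
  apply eq_inv_of_mul_eq_one_left
  rw [mkH_mul, ← mkH_one]
  congr 1 <;> ring

lemma mkH_eq_one_iff (a b c : ℤ) : mkH a b c = 1 ↔ a = 0 ∧ b = 0 ∧ c = 0 := by
  constructor
  · intro hh
    have h' : (!![1, a, c; 0, 1, b; 0, 0, 1] : Matrix (Fin 3) (Fin 3) ℤ)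
        = !![1, 0, 0; 0, 1, 0; 0, 0, 1] := congrArg Subtype.val hh
    refine ⟨?_, ?_, ?_⟩
    · have := congrFun (congrFun h' 0) 1; simpa using this
    · have := congrFun (congrFun h' 1) 2; simpa using this
    · have := congrFun (congrFun h' 0) 2; simpa using this
  · rintro ⟨rfl, rfl, rfl⟩; rfl

lemma mkH_mem_center (c : ℤ) : mkH 0 0 c ∈ Subgroup.center (Heis ℤ) := by
  rw [Subgroup.mem_center_iff]
  intro g
  obtain ⟨a, b, c', hg⟩ := Heis.exists_abc g.2
  have hg' : g = mkH a b c' := Subtype.ext hg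
  rw [hg', mkH_mul, mkH_mul]
  congr 1 <;> ring

lemma γ₁_eq : Heis.γ₁ = mkH 1 0 0 := rfl
lemma γ₂_eq : Heis.γ₂ = mkH 0 1 0 := rfl

/-- A normal subgroup of the discrete Heisenberg group meeting the center trivially
is contained in the center, hence is trivial. -/
theorem normal_subgroup_trivial_center_inter (N : Subgroup (Heis ℤ)) [N.Normal]
    (h : N ⊓ Subgroup.center (Heis ℤ) = ⊥) :
    N ≤ Subgroup.center (Heis ℤ) ∧ N = ⊥ := by
  have hN : N.Normal := inferInstance
  have key : ∀ n ∈ N, n = 1 := by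
    intro n hn
    obtain ⟨a, b, c, hne⟩ := Heis.exists_abc n.2
    have hn' : n = mkH a b c := Subtype.ext hne
    rw [hn'] at hn
    -- commutator with γ₁
    have hk₁ : Heis.γ₁ * mkH a b c * Heis.γ₁⁻¹ * (mkH a b c)⁻¹ ∈ N :=
      N.mul_mem (hN.conj_mem _ hn _) (N.inv_mem hn)
    have ek₁ : Heis.γ₁ * mkH a b c * Heis.γ₁⁻¹ * (mkH a b c)⁻¹ = mkH 0 0 b := by
      rw [γ₁_eq, mkH_inv, mkH_inv, mkH_mul, mkH_mul, mkH_mul]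
      congr 1 <;> ring
    rw [ek₁] at hk₁
    have hb : b = 0 := by
      have : mkH 0 0 b ∈ N ⊓ Subgroup.center (Heis ℤ) := ⟨hk₁, mkH_mem_center b⟩
      rw [h, Subgroup.mem_bot, mkH_eq_one_iff] at this
      exact this.2.2
    have hk₂ : Heis.γ₂ * mkH a b c * Heis.γ₂⁻¹ * (mkH a b c)⁻¹ ∈ N :=
      N.mul_mem (hN.conj_mem _ hn _) (N.inv_mem hn)
    have ek₂ : Heis.γ₂ * mkH a b c * Heis.γ₂⁻¹ * (mkH a b c)⁻¹ = mkH 0 0 (-a) := by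
      rw [γ₂_eq, mkH_inv, mkH_inv, mkH_mul, mkH_mul, mkH_mul]
      congr 1 <;> ring
    rw [ek₂] at hk₂
    have ha : a = 0 := by
      have : mkH 0 0 (-a) ∈ N ⊓ Subgroup.center (Heis ℤ) := ⟨hk₂, mkH_mem_center _⟩
      rw [h, Subgroup.mem_bot, mkH_eq_one_iff] at this
      linarith [this.2.2]
    subst ha; subst hb
    have : mkH 0 0 c ∈ N ⊓ Subgroup.center (Heis ℤ) := ⟨hn, mkH_mem_center c⟩
    rw [h, Subgroup.mem_bot] at this
    rw [hn', this]
  have hbot : N = ⊥ := by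
    ext x
    simp only [Subgroup.mem_bot]
    exact ⟨fun hx => key x hx, fun hx => hx ▸ N.one_mem⟩
  exact ⟨hbot ▸ bot_le, hbot⟩
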